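/- arXiv:2003.07545 — 4 statements merged into one kernel-verified Lean document; each statement's English description precedes it below -/
import Mathlib

section
/- Let X be a real symmetric n×n matrix with all eigenvalues strictly less than 1 in absolute value (‖X‖_∞ := max_j |λ_j(X)| < 1). Then Tr(X) ≥ log det(I + X) ≥ Tr(X) − ‖X‖²_F / (2(1 − ‖X‖_∞)), where ‖X‖_F is the Frobenius norm. -/
open Matrix



lemma key_scalar {s x : ℝ} (hs : s < 1) (hx : |x| ≤ s) :
    x - x ^ 2 / (2 * (1 - s)) ≤ Real.log (1 + x) := by
  have hs0 : 0 ≤ s := (abs_nonneg x).trans hx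
  have h1s : (0:ℝ) < 1 - s := by linarith
  set f : ℝ → ℝ := fun t => Real.log (1 + t) - t + t ^ 2 / (2 * (1 - s)) with hf
  have hD : ∀ t : ℝ, -1 < t →
      HasDerivAt f (1 / (1 + t) - 1 + t / (1 - s)) t := by
    intro t ht
    have h1t : (0:ℝ) < 1 + t := by linarith
    have d1 : HasDerivAt (fun t : ℝ => 1 + t) 1 t := by
      simpa using (hasDerivAt_id t).const_add 1
    have d2 : HasDerivAt (fun t : ℝ => Real.log (1 + t)) (1 / (1 + t)) t := by
      simpa using d1.log h1t.ne'
    have d3 : HasDerivAt (fun t : ℝ => t ^ 2 / (2 * (1 - s))) (t / (1 - s)) t := by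
      have := (hasDerivAt_pow 2 t).div_const (2 * (1 - s))
      refine this.congr_deriv ?_
      field_simp
      ring
    exact (d2.sub (hasDerivAt_id t)).add d3
  have hcont : ∀ t : ℝ, -1 < t → ContinuousAt f t := fun t ht =>
    (hD t ht).differentiableAt.continuousAt
  have hf0 : f 0 = 0 := by simp [hf]
  have hfx : 0 ≤ f x := by
    rcases le_or_gt 0 x with hx0 | hx0
    · have hmono : MonotoneOn f (Set.Icc 0 s) := by
        apply monotoneOn_of_deriv_nonneg (convex_Icc 0 s)
        · intro t ht
          exact (hcont t (by linarith [ht.1])).continuousWithinAt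
        · intro t ht
          rw [interior_Icc] at ht
          exact (hD t (by linarith [ht.1])).differentiableAt.differentiableWithinAt
        · intro t ht
          rw [interior_Icc] at ht
          have ht1 : -1 < t := by linarith [ht.1]
          rw [(hD t ht1).deriv]
          have h1t : (0:ℝ) < 1 + t := by linarith
          have heq : 1 / (1 + t) - 1 + t / (1 - s) = t * (t + s) / ((1 + t) * (1 - s)) := by
            field_simp
            ring
          rw [heq]
          have : 0 ≤ t * (t + s) := mul_nonneg ht.1.le (by linarith [ht.1.le])
          positivity
      have := hmono (Set.mem_Icc.2 ⟨le_refl 0, hs0⟩)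
        (Set.mem_Icc.2 ⟨hx0, (le_abs_self x).trans hx⟩) hx0
      linarith [hf0 ▸ this]
    · have hanti : AntitoneOn f (Set.Icc (-s) 0) := by
        apply antitoneOn_of_deriv_nonpos (convex_Icc (-s) 0)
        · intro t ht
          exact (hcont t (by linarith [ht.1])).continuousWithinAt
        · intro t ht
          rw [interior_Icc] at ht
          exact (hD t (by linarith [ht.1])).differentiableAt.differentiableWithinAt
        · intro t ht
          rw [interior_Icc] at ht
          have ht1 : -1 < t := by linarith [ht.1]
          rw [(hD t ht1).deriv]
          have h1t : (0:ℝ) < 1 + t := by linarith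
          have heq : 1 / (1 + t) - 1 + t / (1 - s) = t * (t + s) / ((1 + t) * (1 - s)) := by
            field_simp
            ring
          rw [heq]
          have hnum : t * (t + s) ≤ 0 :=
            mul_nonpos_of_nonpos_of_nonneg ht.2.le (by linarith [ht.1.le])
          exact div_nonpos_of_nonpos_of_nonneg hnum (by positivity)
      have hxmem : x ∈ Set.Icc (-s) 0 :=
        Set.mem_Icc.2 ⟨by linarith [neg_abs_le x, neg_le_neg hx], hx0.le⟩
      have := hanti hxmem (Set.mem_Icc.2 ⟨by linarith, le_refl 0⟩) hx0.le
      linarith [hf0 ▸ this]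
  simp only [hf] at hfx
  linarith

section aux

variable {n : ℕ} {X : Matrix (Fin n) (Fin n) ℝ} (hX : X.IsHermitian)

lemma trace_eq_sum_eig : Matrix.trace X = ∑ j, hX.eigenvalues j := by
  have h : star (hX.eigenvectorUnitary : Matrix (Fin n) (Fin n) ℝ) * X * (hX.eigenvectorUnitary : Matrix (Fin n) (Fin n) ℝ) = diagonal (RCLike.ofReal ∘ hX.eigenvalues) := hX.conjStarAlgAut_star_eigenvectorUnitary
  set U : Matrix (Fin n) (Fin n) ℝ := (Matrix.IsHermitian.eigenvectorUnitary hX : Matrix (Fin n) (Fin n) ℝ) with hU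
  have hUU : U * star U = 1 := (Matrix.mem_unitaryGroup_iff).mp (Matrix.IsHermitian.eigenvectorUnitary hX).2
  calc Matrix.trace X = Matrix.trace (X * (U * star U)) := by rw [hUU, mul_one]
    _ = Matrix.trace (star U * X * U) := by
        rw [← mul_assoc, Matrix.trace_mul_comm, mul_assoc]
    _ = ∑ j, hX.eigenvalues j := by
        rw [h]; simp [Matrix.trace_diagonal, RCLike.ofReal_real_eq_id]

lemma trace_sq_eq_sum_eig : Matrix.trace (Xᵀ * X) = ∑ j, (hX.eigenvalues j) ^ 2 := by
  have h : star (hX.eigenvectorUnitary : Matrix (Fin n) (Fin n) ℝ) * X * (hX.eigenvectorUnitary : Matrix (Fin n) (Fin n) ℝ) = diagonal (RCLike.ofReal ∘ hX.eigenvalues) := hX.conjStarAlgAut_star_eigenvectorUnitary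
  set U : Matrix (Fin n) (Fin n) ℝ := (Matrix.IsHermitian.eigenvectorUnitary hX : Matrix (Fin n) (Fin n) ℝ) with hU
  have hUU : U * star U = 1 := (Matrix.mem_unitaryGroup_iff).mp (Matrix.IsHermitian.eigenvectorUnitary hX).2
  have hXt : Xᵀ = X := by
    rw [← Matrix.conjTranspose_eq_transpose_of_trivial, hX.eq]
  have hDD : (star U * X * U) * (star U * X * U) = star U * (X * X) * U := by
    have hUU' : star U * U = 1 := Unitary.coe_star_mul_self _
    calc (star U * X * U) * (star U * X * U)
        = star U * X * ((U * star U) * (X * U)) := by simp only [mul_assoc]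
      _ = star U * (X * X) * U := by rw [hUU, one_mul]; simp only [mul_assoc]
  rw [hXt]
  calc Matrix.trace (X * X) = Matrix.trace ((X * X) * (U * star U)) := by rw [hUU, mul_one]
    _ = Matrix.trace (star U * (X * X) * U) := by
        rw [← mul_assoc, Matrix.trace_mul_comm, ← mul_assoc]
    _ = Matrix.trace ((star U * X * U) * (star U * X * U)) := by rw [hDD]
    _ = ∑ j, (hX.eigenvalues j) ^ 2 := by
        rw [h]; simp [Matrix.diagonal_mul_diagonal, Matrix.trace_diagonal,
          RCLike.ofReal_real_eq_id, sq]

lemma det_one_add_eq : (1 + X).det = ∏ j, (1 + hX.eigenvalues j) := by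
  set U : Matrix (Fin n) (Fin n) ℝ := (Matrix.IsHermitian.eigenvectorUnitary hX : Matrix (Fin n) (Fin n) ℝ) with hU
  have hUU : U * star U = 1 := (Matrix.mem_unitaryGroup_iff).mp (Matrix.IsHermitian.eigenvectorUnitary hX).2
  have hXeq := hX.spectral_theorem
  simp only [Unitary.conjStarAlgAut_apply, ← hU] at hXeq
  have h1 : (1 : Matrix (Fin n) (Fin n) ℝ) + X
      = U * (1 + Matrix.diagonal (RCLike.ofReal ∘ hX.eigenvalues)) * star U := by
    rw [mul_add, add_mul, mul_one, ← hXeq, hUU]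
  have hdetU : U.det * (star U).det = 1 := by
    rw [← Matrix.det_mul, hUU, Matrix.det_one]
  have hdiag : (1 : Matrix (Fin n) (Fin n) ℝ) + Matrix.diagonal (RCLike.ofReal ∘ hX.eigenvalues)
      = Matrix.diagonal (fun j => 1 + hX.eigenvalues j) := by
    rw [← Matrix.diagonal_one, Matrix.diagonal_add]
    rfl
  rw [h1, hdiag, Matrix.det_mul, Matrix.det_mul]
  have : U.det * (Matrix.diagonal (fun j => 1 + hX.eigenvalues j)).det * (star U).det
      = (Matrix.diagonal (fun j => 1 + hX.eigenvalues j)).det * (U.det * (star U).det) := by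
    ring
  rw [this, hdetU, mul_one, Matrix.det_diagonal]

end aux

/-- For a symmetric matrix `X` with all eigenvalues less than `1` in absolute value,
`Tr(X) ≥ log det(I + X) ≥ Tr(X) − ‖X‖_F² / (2(1 − ‖X‖_∞))`, where
`‖X‖_∞ = max_j |λ_j(X)|` and `‖X‖_F² = Tr(XᵀX)`. -/
theorem stmt6 {n : ℕ} (X : Matrix (Fin n) (Fin n) ℝ) (hX : X.IsHermitian)
    (hspec : (⨆ j, |hX.eigenvalues j|) < 1) :
    Real.log (1 + X).det ≤ Matrix.trace X ∧
      Matrix.trace X - Matrix.trace (Xᵀ * X) / (2 * (1 - ⨆ j, |hX.eigenvalues j|)) ≤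
        Real.log (1 + X).det := by
  set s := ⨆ j, |hX.eigenvalues j| with hs
  have hbdd : ∀ j, |hX.eigenvalues j| ≤ s := by
    intro j
    rw [hs]
    exact le_ciSup (f := fun j => |hX.eigenvalues j|)
      (Set.Finite.bddAbove (Set.finite_range _)) j
  have hpos : ∀ j, 0 < 1 + hX.eigenvalues j := fun j => by
    have h1 := (hbdd j).trans_lt hspec
    have := abs_lt.mp h1
    linarith [this.1]
  have hlog : Real.log (1 + X).det = ∑ j, Real.log (1 + hX.eigenvalues j) := by
    rw [det_one_add_eq hX, Real.log_prod]
    exact fun j _ => (hpos j).ne'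
  constructor
  · rw [hlog, trace_eq_sum_eig hX]
    apply Finset.sum_le_sum
    intro j _
    have := Real.log_le_sub_one_of_pos (hpos j)
    linarith
  · rw [hlog, trace_eq_sum_eig hX, trace_sq_eq_sum_eig hX]
    have hsum : ∑ j, (hX.eigenvalues j - (hX.eigenvalues j) ^ 2 / (2 * (1 - s)))
        ≤ ∑ j, Real.log (1 + hX.eigenvalues j) :=
      Finset.sum_le_sum fun j _ => key_scalar hspec (hbdd j)
    rw [Finset.sum_sub_distrib, ← Finset.sum_div] at hsum
    exact hsum
end

section
/- The function P(D, κ) = log det(M − D) + log det(κD − M) + log det D is jointly concave in (κ, D) on any convex domain of the form (κ̲, ∞) × 𝒟(κ̲), where M is a fixed symmetric positive definite matrix and 𝒟(κ̲) is the set of positive definite matrices D with M − D ≻ 0 and κ̲D − M ≻ 0. -/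
open Matrix Finset
open scoped MatrixOrder

namespace Stmt14Aux

variable {n : ℕ}

lemma isHermitian_smul {A : Matrix (Fin n) (Fin n) ℝ} (hA : A.IsHermitian) (c : ℝ) :
    (c • A).IsHermitian := by
  unfold Matrix.IsHermitian
  rw [conjTranspose_smul, star_trivial, hA.eq]

lemma posDef_smul {A : Matrix (Fin n) (Fin n) ℝ} (hA : A.PosDef) {c : ℝ} (hc : 0 < c) :
    (c • A).PosDef := by
  refine posDef_iff_dotProduct_mulVec.mpr ⟨isHermitian_smul hA.1 c, fun x hx => ?_⟩
  have := hA.dotProduct_mulVec_pos hx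
  rw [smul_mulVec, dotProduct_smul, smul_eq_mul]
  positivity

lemma posSemidef_smul {A : Matrix (Fin n) (Fin n) ℝ} (hA : A.PosSemidef) {c : ℝ} (hc : 0 ≤ c) :
    (c • A).PosSemidef := by
  refine posSemidef_iff_dotProduct_mulVec.mpr ⟨isHermitian_smul hA.1 c, fun x => ?_⟩
  have := hA.dotProduct_mulVec_nonneg x
  rw [smul_mulVec, dotProduct_smul, smul_eq_mul]
  positivity

lemma posDef_combo {A B : Matrix (Fin n) (Fin n) ℝ} (hA : A.PosDef) (hB : B.PosDef)
    {a b : ℝ} (ha : 0 ≤ a) (hb : 0 ≤ b) (hab : a + b = 1) :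
    (a • A + b • B).PosDef := by
  rcases ha.eq_or_lt with rfl | ha'
  · have hb1 : b = 1 := by linarith
    simpa [hb1] using hB
  · exact (posDef_smul hA ha').add_posSemidef (posSemidef_smul hB.posSemidef hb)

lemma posDef_of_det_ne_zero {A : Matrix (Fin n) (Fin n) ℝ} (hA : A.PosSemidef)
    (h : A.det ≠ 0) : A.PosDef := by
  refine posDef_iff_dotProduct_mulVec.mpr ⟨hA.1, fun x hx => ?_⟩
  rcases (hA.dotProduct_mulVec_nonneg x).eq_or_lt with he | hlt
  · exfalso
    have hAx : A *ᵥ x = 0 := (hA.dotProduct_mulVec_zero_iff x).mp he.symm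
    have hxz : x = 0 := by
      have hA' : IsUnit A := (Matrix.isUnit_iff_isUnit_det A).2 h.isUnit
      have := congrArg (fun v => A⁻¹ *ᵥ v) hAx
      simpa [Matrix.mulVec_mulVec, Matrix.nonsing_inv_mul A h.isUnit] using this
    exact hx hxz
  · exact hlt

/-- `det (α•1 + β•S) = ∏ (α + β λᵢ)` for Hermitian `S`. -/
lemma det_smul_one_add_smul {S : Matrix (Fin n) (Fin n) ℝ} (hS : S.IsHermitian) (α β : ℝ) :
    (α • (1 : Matrix (Fin n) (Fin n) ℝ) + β • S).det
      = ∏ i, (α + β * hS.eigenvalues i) := by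
  set U : Matrix (Fin n) (Fin n) ℝ := (hS.eigenvectorUnitary : Matrix (Fin n) (Fin n) ℝ) with hUdef
  have hU : U * star U = 1 := (Matrix.mem_unitaryGroup_iff).mp hS.eigenvectorUnitary.2
  have hST : S = U * diagonal hS.eigenvalues * star U := by
    simpa [hUdef, Function.comp] using hS.spectral_theorem
  have key : α • (1 : Matrix (Fin n) (Fin n) ℝ) + β • S
      = U * diagonal (fun i => α + β * hS.eigenvalues i) * star U := by
    have hdiag : diagonal (fun i => α + β * hS.eigenvalues i)
        = α • (1 : Matrix (Fin n) (Fin n) ℝ) + β • diagonal hS.eigenvalues := by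
      rw [← diagonal_one, ← diagonal_smul, ← diagonal_smul, diagonal_add]
      funext i j
      by_cases h : i = j <;> simp [diagonal, h, mul_comm]
    rw [hdiag, mul_add, add_mul, mul_smul_comm, smul_mul_assoc, mul_one, hU,
      mul_smul_comm, smul_mul_assoc, ← hST]
  rw [key, Matrix.det_mul_right_comm, hU, one_mul, det_diagonal]

/-- If `B ≻ 0` and `A - B ⪰ 0` then `A ≻ 0`. -/
lemma posDef_of_sub_posSemidef {A B : Matrix (Fin n) (Fin n) ℝ} (hB : B.PosDef)
    (h : (A - B).PosSemidef) : A.PosDef := by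
  have := hB.add_posSemidef h
  simpa using this

/-- If `B ≻ 0` and `A - B ⪰ 0` then `det B ≤ det A`. -/
lemma det_mono_of_sub_posSemidef {A B : Matrix (Fin n) (Fin n) ℝ} (hB : B.PosDef)
    (h : (A - B).PosSemidef) : B.det ≤ A.det := by
  set L := CFC.sqrt B with hLdef
  have hLL : L * L = B := CFC.sqrt_mul_sqrt_self B hB.posSemidef.nonneg
  have hLher : L.IsHermitian := (CFC.sqrt_nonneg B).posSemidef.1
  have hdetL : L.det ≠ 0 := by
    intro h0
    have : B.det = 0 := by rw [← hLL, det_mul, h0, zero_mul]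
    exact hB.det_pos.ne' this
  have h1 : L * L⁻¹ = 1 := Matrix.mul_nonsing_inv _ hdetL.isUnit
  have h2 : L⁻¹ * L = 1 := Matrix.nonsing_inv_mul _ hdetL.isUnit
  set S := L⁻¹ * (A - B) * L⁻¹ with hSdef
  have hS : S.PosSemidef := by
    have := h.mul_mul_conjTranspose_same L⁻¹
    rwa [hLher.inv.eq] at this
  have hmid : L * S * L = A - B := by
    rw [hSdef]
    simp only [← mul_assoc]
    rw [h1, one_mul, mul_assoc, h2, mul_one]
  have hA_eq : L * (1 + S) * L = A := by
    rw [mul_add, add_mul, mul_one, hLL, hmid]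
    abel
  have hdet1S : (1 : ℝ) ≤ (1 + S).det := by
    have : ((1:ℝ) • (1 : Matrix (Fin n) (Fin n) ℝ) + (1:ℝ) • S).det
        = ∏ i, (1 + 1 * hS.1.eigenvalues i) := det_smul_one_add_smul hS.1 1 1
    simp only [one_smul, one_mul] at this
    rw [this]
    calc (1:ℝ) = ∏ _i : Fin n, (1:ℝ) := by simp
    _ ≤ ∏ i, (1 + hS.1.eigenvalues i) := by
        apply Finset.prod_le_prod (by simp)
        intro i _
        have := hS.eigenvalues_nonneg i
        linarith
  have : A.det = B.det * (1 + S).det := by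
    rw [← hA_eq, det_mul, det_mul, ← hLL, det_mul]
    ring
  rw [this]
  exact le_mul_of_one_le_right hB.det_pos.le hdet1S

lemma log_combo {x y a b : ℝ} (hx : 0 < x) (hy : 0 < y) (ha : 0 ≤ a) (hb : 0 ≤ b)
    (hab : a + b = 1) : a * Real.log x + b * Real.log y ≤ Real.log (a * x + b * y) := by
  have h := Real.geom_mean_le_arith_mean2_weighted ha hb hx.le hy.le hab
  have hpos : 0 < x ^ a * y ^ b := mul_pos (Real.rpow_pos_of_pos hx a) (Real.rpow_pos_of_pos hy b)
  have := Real.log_le_log hpos h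
  rwa [Real.log_mul (Real.rpow_pos_of_pos hx a).ne' (Real.rpow_pos_of_pos hy b).ne',
    Real.log_rpow hx, Real.log_rpow hy] at this

/-- Concavity of `log det` on positive definite matrices. -/
lemma logdet_concave {X Y : Matrix (Fin n) (Fin n) ℝ} (hX : X.PosDef) (hY : Y.PosDef)
    {a b : ℝ} (ha : 0 ≤ a) (hb : 0 ≤ b) (hab : a + b = 1) :
    a * Real.log X.det + b * Real.log Y.det ≤ Real.log (a • X + b • Y).det := by
  rcases ha.eq_or_lt with rfl | ha'
  · have hb1 : b = 1 := by linarith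
    simp [hb1]
  rcases hb.eq_or_lt with rfl | hb'
  · have ha1 : a = 1 := by linarith
    simp [ha1]
  set L := CFC.sqrt X with hLdef
  have hLL : L * L = X := CFC.sqrt_mul_sqrt_self X hX.posSemidef.nonneg
  have hLher : L.IsHermitian := (CFC.sqrt_nonneg X).posSemidef.1
  have hdetL : L.det ≠ 0 := by
    intro h0
    have : X.det = 0 := by rw [← hLL, det_mul, h0, zero_mul]
    exact hX.det_pos.ne' this
  have h1 : L * L⁻¹ = 1 := Matrix.mul_nonsing_inv _ hdetL.isUnit
  have h2 : L⁻¹ * L = 1 := Matrix.nonsing_inv_mul _ hdetL.isUnit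
  set S := L⁻¹ * Y * L⁻¹ with hSdef
  have hSpsd : S.PosSemidef := by
    have := hY.posSemidef.mul_mul_conjTranspose_same L⁻¹
    rwa [hLher.inv.eq] at this
  have hmid : L * S * L = Y := by
    rw [hSdef]
    simp only [← mul_assoc]
    rw [h1, one_mul, mul_assoc, h2, mul_one]
  have hdetS : S.det ≠ 0 := by
    intro h0
    have : Y.det = 0 := by rw [← hmid, det_mul, det_mul, h0, mul_zero, zero_mul]
    exact hY.det_pos.ne' this
  have hS : S.PosDef := posDef_of_det_ne_zero hSpsd hdetS
  have hkey : L * (a • (1 : Matrix (Fin n) (Fin n) ℝ) + b • S) * L = a • X + b • Y := by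
    rw [mul_add, add_mul, mul_smul_comm, smul_mul_assoc, mul_one, hLL,
      mul_smul_comm, smul_mul_assoc, hmid]
  have hdetXY : (a • X + b • Y).det = X.det * ∏ i, (a + b * hS.1.eigenvalues i) := by
    rw [← hkey, det_mul, det_mul, det_smul_one_add_smul hS.1 a b, ← hLL, det_mul]
    ring
  have hdetY : Y.det = X.det * S.det := by
    rw [← hmid, ← hLL, hSdef]
    simp only [det_mul]
    ring
  have hXpos := hX.det_pos
  have heig : ∀ i, 0 < hS.1.eigenvalues i := fun i => hS.eigenvalues_pos i
  have hfac : ∀ i : Fin n, 0 < a + b * hS.1.eigenvalues i := fun i => by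
    have := heig i; positivity
  have hlogS : Real.log S.det = ∑ i, Real.log (hS.1.eigenvalues i) := by
    have : S.det = ∏ i, hS.1.eigenvalues i := by
      simpa using hS.1.det_eq_prod_eigenvalues
    rw [this]
    exact Real.log_prod (fun i _ => (heig i).ne')
  have hlogP : Real.log (∏ i, (a + b * hS.1.eigenvalues i))
      = ∑ i, Real.log (a + b * hS.1.eigenvalues i) :=
    Real.log_prod (fun i _ => (hfac i).ne')
  have hsum : ∑ i, b * Real.log (hS.1.eigenvalues i)
      ≤ ∑ i, Real.log (a + b * hS.1.eigenvalues i) := by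
    apply Finset.sum_le_sum
    intro i _
    have := log_combo one_pos (heig i) ha hb hab
    simpa using this
  have hprodpos : (0:ℝ) < ∏ i, (a + b * hS.1.eigenvalues i) :=
    Finset.prod_pos (fun i _ => hfac i)
  rw [hdetXY, Real.log_mul hXpos.ne' hprodpos.ne', hdetY,
    Real.log_mul hXpos.ne' hdetS, hlogP, hlogS]
  have hsum' : b * ∑ i, Real.log (hS.1.eigenvalues i)
      ≤ ∑ i, Real.log (a + b * hS.1.eigenvalues i) := by
    rw [Finset.mul_sum]; exact hsum
  have e2 : a * Real.log X.det + b * Real.log X.det = Real.log X.det := by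
    rw [← add_mul, hab, one_mul]
  linarith

lemma combo_lt {x y c a b : ℝ} (hx : c < x) (hy : c < y) (ha : 0 ≤ a) (hb : 0 ≤ b)
    (hab : a + b = 1) : c < a * x + b * y := by
  rcases ha.eq_or_lt with rfl | ha'
  · have hb1 : b = 1 := by linarith
    simpa [hb1] using hy
  · have e : a * c + b * c = c := by rw [← add_mul, hab, one_mul]
    linarith [mul_pos ha' (sub_pos.2 hx), mul_nonneg hb (sub_pos.2 hy).le]

lemma amhm {x y a b : ℝ} (hx : 0 < x) (hy : 0 < y) (ha : 0 ≤ a) (hb : 0 ≤ b)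
    (hab : a + b = 1) : 1 ≤ (a * x + b * y) * (a * x⁻¹ + b * y⁻¹) := by
  have h2 : 2 ≤ y / x + x / y := by
    rw [div_add_div _ _ hx.ne' hy.ne', le_div_iff₀ (mul_pos hx hy)]
    nlinarith [sq_nonneg (x - y)]
  have e : (a * x + b * y) * (a * x⁻¹ + b * y⁻¹) = a ^ 2 + b ^ 2 + a * b * (y / x + x / y) := by
    field_simp
    ring
  rw [e]
  nlinarith [mul_nonneg ha hb, sq_nonneg (a + b - 1)]

lemma kappa_low_pos (hn : 0 < n) {M D : Matrix (Fin n) (Fin n) ℝ} (hM : M.PosDef)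
    (hD : D.PosDef) {c : ℝ} (hc : (c • D - M).PosDef) : 0 < c := by
  set x : Fin n → ℝ := Pi.single (⟨0, hn⟩ : Fin n) 1 with hx
  have hx0 : x ≠ 0 := by
    intro h
    have := congrFun h ⟨0, hn⟩
    simp [hx] at this
  have hd := hD.dotProduct_mulVec_pos hx0
  have hm := hM.dotProduct_mulVec_pos hx0
  have hk := hc.dotProduct_mulVec_pos hx0
  rw [sub_mulVec, dotProduct_sub, smul_mulVec, dotProduct_smul, smul_eq_mul] at hk
  simp only [star_trivial] at hd hm hk
  nlinarith [hd, hm, hk]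

end Stmt14Aux

/-- The potential `P(D, κ) = log det(M − D) + log det(κD − M) + log det D` is jointly
concave in `(κ, D)` on the convex domain `(κ̲, ∞) × 𝒟(κ̲)`, where `𝒟(κ̲)` is the set of
positive definite `D` with `M − D ≻ 0` and `κ̲D − M ≻ 0`. -/
theorem stmt14 {n : ℕ} (M : Matrix (Fin n) (Fin n) ℝ) (hM : M.PosDef) (κlow : ℝ) :
    ConcaveOn ℝ
      {q : ℝ × Matrix (Fin n) (Fin n) ℝ |
        κlow < q.1 ∧ q.2.PosDef ∧ (M - q.2).PosDef ∧ (κlow • q.2 - M).PosDef}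
      (fun q => Real.log (M - q.2).det + Real.log (q.1 • q.2 - M).det +
        Real.log q.2.det) := by
  classical
  constructor
  · -- convexity of the domain
    rintro ⟨κ₁, D₁⟩ ⟨hp1, hp2, hp3, hp4⟩ ⟨κ₂, D₂⟩ ⟨hq1, hq2, hq3, hq4⟩ a b ha hb hab
    simp only [Set.mem_setOf_eq, Prod.smul_mk, Prod.mk_add_mk, smul_eq_mul] at *
    refine ⟨Stmt14Aux.combo_lt hp1 hq1 ha hb hab,
      Stmt14Aux.posDef_combo hp2 hq2 ha hb hab, ?_, ?_⟩
    · have h1 : a • (M - D₁) + b • (M - D₂) = (a + b) • M - (a • D₁ + b • D₂) := by module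
      rw [hab, one_smul] at h1
      rw [← h1]
      exact Stmt14Aux.posDef_combo hp3 hq3 ha hb hab
    · have h1 : a • (κlow • D₁ - M) + b • (κlow • D₂ - M)
          = κlow • (a • D₁ + b • D₂) - (a + b) • M := by module
      rw [hab, one_smul] at h1
      rw [← h1]
      exact Stmt14Aux.posDef_combo hp4 hq4 ha hb hab
  · -- the concavity inequality
    rintro ⟨κ₁, D₁⟩ ⟨hp1, hp2, hp3, hp4⟩ ⟨κ₂, D₂⟩ ⟨hq1, hq2, hq3, hq4⟩ a b ha hb hab
    simp only [Set.mem_setOf_eq, Prod.smul_mk, Prod.mk_add_mk, smul_eq_mul] at *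
    rcases Nat.eq_zero_or_pos n with hn | hn
    · subst hn
      simp [Matrix.det_fin_zero]
    -- T1
    have T1 : a * Real.log (M - D₁).det + b * Real.log (M - D₂).det
        ≤ Real.log (M - (a • D₁ + b • D₂)).det := by
      have h1 : a • (M - D₁) + b • (M - D₂) = (a + b) • M - (a • D₁ + b • D₂) := by module
      rw [hab, one_smul] at h1
      rw [← h1]
      exact Stmt14Aux.logdet_concave hp3 hq3 ha hb hab
    -- T3
    have T3 : a * Real.log D₁.det + b * Real.log D₂.det
        ≤ Real.log (a • D₁ + b • D₂).det :=
      Stmt14Aux.logdet_concave hp2 hq2 ha hb hab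
    -- T2
    have hκlow : 0 < κlow := Stmt14Aux.kappa_low_pos hn hM hp2 hp4
    have hκ₁ : 0 < κ₁ := lt_trans hκlow hp1
    have hκ₂ : 0 < κ₂ := lt_trans hκlow hq1
    have hK : 0 < a * κ₁ + b * κ₂ := Stmt14Aux.combo_lt hκ₁ hκ₂ ha hb hab
    -- κᵢ • Dᵢ - M is positive definite
    have hPD1 : (κ₁ • D₁ - M).PosDef := by
      apply Stmt14Aux.posDef_of_sub_posSemidef hp4
      have e : κ₁ • D₁ - M - (κlow • D₁ - M) = (κ₁ - κlow) • D₁ := by module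
      rw [e]
      exact Stmt14Aux.posSemidef_smul hp2.posSemidef (by linarith)
    have hPD2 : (κ₂ • D₂ - M).PosDef := by
      apply Stmt14Aux.posDef_of_sub_posSemidef hq4
      have e : κ₂ • D₂ - M - (κlow • D₂ - M) = (κ₂ - κlow) • D₂ := by module
      rw [e]
      exact Stmt14Aux.posSemidef_smul hq2.posSemidef (by linarith)
    -- the "perspective" matrices Eᵢ = Dᵢ - κᵢ⁻¹ • M
    have hE₁eq : κ₁ • (D₁ - κ₁⁻¹ • M) = κ₁ • D₁ - M := by
      rw [smul_sub, smul_smul, mul_inv_cancel₀ hκ₁.ne', one_smul]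
    have hE₂eq : κ₂ • (D₂ - κ₂⁻¹ • M) = κ₂ • D₂ - M := by
      rw [smul_sub, smul_smul, mul_inv_cancel₀ hκ₂.ne', one_smul]
    have hE₁ : (D₁ - κ₁⁻¹ • M).PosDef := by
      have h := Stmt14Aux.posDef_smul hPD1 (inv_pos.2 hκ₁)
      rw [← hE₁eq, smul_smul, inv_mul_cancel₀ hκ₁.ne', one_smul] at h
      exact h
    have hE₂ : (D₂ - κ₂⁻¹ • M).PosDef := by
      have h := Stmt14Aux.posDef_smul hPD2 (inv_pos.2 hκ₂)
      rw [← hE₂eq, smul_smul, inv_mul_cancel₀ hκ₂.ne', one_smul] at h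
      exact h
    have hC : (a • (D₁ - κ₁⁻¹ • M) + b • (D₂ - κ₂⁻¹ • M)).PosDef :=
      Stmt14Aux.posDef_combo hE₁ hE₂ ha hb hab
    have hB' : ((a * κ₁ + b * κ₂) • (a • (D₁ - κ₁⁻¹ • M) + b • (D₂ - κ₂⁻¹ • M))).PosDef :=
      Stmt14Aux.posDef_smul hC hK
    have hcnn : 0 ≤ (a * κ₁ + b * κ₂) * (a * κ₁⁻¹ + b * κ₂⁻¹) - 1 := by
      have := Stmt14Aux.amhm hκ₁ hκ₂ ha hb hab
      linarith
    have hdiff : ((a * κ₁ + b * κ₂) • (a • D₁ + b • D₂) - M)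
        - (a * κ₁ + b * κ₂) • (a • (D₁ - κ₁⁻¹ • M) + b • (D₂ - κ₂⁻¹ • M))
        = ((a * κ₁ + b * κ₂) * (a * κ₁⁻¹ + b * κ₂⁻¹) - 1) • M := by
      module
    have hdiffPSD : (((a * κ₁ + b * κ₂) • (a • D₁ + b • D₂) - M)
        - (a * κ₁ + b * κ₂) • (a • (D₁ - κ₁⁻¹ • M) + b • (D₂ - κ₂⁻¹ • M))).PosSemidef := by
      rw [hdiff]
      exact Stmt14Aux.posSemidef_smul hM.posSemidef hcnn
    have hA' : ((a * κ₁ + b * κ₂) • (a • D₁ + b • D₂) - M).PosDef :=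
      Stmt14Aux.posDef_of_sub_posSemidef hB' hdiffPSD
    have f6 : Real.log ((a * κ₁ + b * κ₂) • (a • (D₁ - κ₁⁻¹ • M) + b • (D₂ - κ₂⁻¹ • M))).det
        ≤ Real.log (((a * κ₁ + b * κ₂) • (a • D₁ + b • D₂) - M)).det :=
      Real.log_le_log hB'.det_pos (Stmt14Aux.det_mono_of_sub_posSemidef hB' hdiffPSD)
    have hlogsmul : ∀ (c : ℝ), 0 < c → ∀ (A : Matrix (Fin n) (Fin n) ℝ), A.PosDef →
        Real.log (c • A).det = n * Real.log c + Real.log A.det := by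
      intro c hc A hA
      rw [Matrix.det_smul, Real.log_mul (by positivity) hA.det_pos.ne', Real.log_pow]
      simp
    have f3 : Real.log ((a * κ₁ + b * κ₂) • (a • (D₁ - κ₁⁻¹ • M) + b • (D₂ - κ₂⁻¹ • M))).det
        = n * Real.log (a * κ₁ + b * κ₂)
          + Real.log (a • (D₁ - κ₁⁻¹ • M) + b • (D₂ - κ₂⁻¹ • M)).det :=
      hlogsmul _ hK _ hC
    have f1 : Real.log (κ₁ • D₁ - M).det
        = n * Real.log κ₁ + Real.log (D₁ - κ₁⁻¹ • M).det := by
      rw [← hE₁eq]; exact hlogsmul _ hκ₁ _ hE₁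
    have f2 : Real.log (κ₂ • D₂ - M).det
        = n * Real.log κ₂ + Real.log (D₂ - κ₂⁻¹ • M).det := by
      rw [← hE₂eq]; exact hlogsmul _ hκ₂ _ hE₂
    have f4 : a * Real.log (D₁ - κ₁⁻¹ • M).det + b * Real.log (D₂ - κ₂⁻¹ • M).det
        ≤ Real.log (a • (D₁ - κ₁⁻¹ • M) + b • (D₂ - κ₂⁻¹ • M)).det :=
      Stmt14Aux.logdet_concave hE₁ hE₂ ha hb hab
    have f5 : a * Real.log κ₁ + b * Real.log κ₂ ≤ Real.log (a * κ₁ + b * κ₂) :=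
      Stmt14Aux.log_combo hκ₁ hκ₂ ha hb hab
    have f5' : (n : ℝ) * (a * Real.log κ₁ + b * Real.log κ₂)
        ≤ (n : ℝ) * Real.log (a * κ₁ + b * κ₂) :=
      mul_le_mul_of_nonneg_left f5 (by positivity)
    have T2 : a * Real.log (κ₁ • D₁ - M).det + b * Real.log (κ₂ • D₂ - M).det
        ≤ Real.log ((a * κ₁ + b * κ₂) • (a • D₁ + b • D₂) - M).det := by
      rw [f1, f2]
      nlinarith [f3, f4, f5', f6]
    nlinarith [T1, T2, T3]
end

section
/- Let f(X, w) = (1/n) Σᵢ fᵢ(wᵀxᵢ) with each fᵢ λ-strongly convex and L-smooth, κ₀ = L/λ. Then for any positive diagonal matrix D with κ(DXᵀXD) ≤ κ(XᵀX), one has κ(∇²_w f(XD, w)) ≤ κ₀² · κ(∇²_w f(X, w)) · κ(DXᵀXD)/κ(XᵀX). -/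
open Matrix

/-- Condition number of a symmetric matrix: ratio of largest to smallest eigenvalue. -/
noncomputable def kappa {p : ℕ} (A : Matrix (Fin p) (Fin p) ℝ) (hA : A.IsHermitian) : ℝ :=
  (⨆ i, hA.eigenvalues i) / (⨅ i, hA.eigenvalues i)

section helpers
variable {p : ℕ}

lemma dot_self_basis {M : Matrix (Fin p) (Fin p) ℝ} (hM : M.IsHermitian) (j : Fin p) :
    ⇑(hM.eigenvectorBasis j) ⬝ᵥ ⇑(hM.eigenvectorBasis j) = 1 := by
  have h := hM.eigenvectorBasis.orthonormal.1 j
  have h2 : (inner ℝ (hM.eigenvectorBasis j) (hM.eigenvectorBasis j) : ℝ) = 1 := by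
    rw [real_inner_self_eq_norm_sq, h]; norm_num
  rw [EuclideanSpace.inner_eq_star_dotProduct] at h2
  simpa [dotProduct] using h2

lemma eig_eq_quad {M : Matrix (Fin p) (Fin p) ℝ} (hM : M.IsHermitian) (j : Fin p) :
    hM.eigenvalues j = ⇑(hM.eigenvectorBasis j) ⬝ᵥ (M *ᵥ ⇑(hM.eigenvectorBasis j)) := by
  rw [hM.mulVec_eigenvectorBasis]
  simp [dotProduct_smul, dot_self_basis hM j]

lemma rayleigh_bounds [Nonempty (Fin p)] {M : Matrix (Fin p) (Fin p) ℝ}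
    (hM : M.IsHermitian) (v : Fin p → ℝ) :
    (⨅ i, hM.eigenvalues i) * (v ⬝ᵥ v) ≤ v ⬝ᵥ (M *ᵥ v) ∧
      v ⬝ᵥ (M *ᵥ v) ≤ (⨆ i, hM.eigenvalues i) * (v ⬝ᵥ v) := by
  classical
  set U : Matrix (Fin p) (Fin p) ℝ := (hM.eigenvectorUnitary : Matrix (Fin p) (Fin p) ℝ) with hU
  have hUU : U * star U = 1 := Unitary.mul_star_self_of_mem hM.eigenvectorUnitary.2
  set u : Fin p → ℝ := star U *ᵥ v with hu
  have hspec : M = U * diagonal hM.eigenvalues * star U := by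
    have := hM.spectral_theorem
    simpa [RCLike.ofReal_real_eq_id] using this
  have hT : Uᵀ = star U := by
    ext i j; simp [star, conjTranspose]
  have hq : v ⬝ᵥ (M *ᵥ v) = ∑ i, hM.eigenvalues i * (u i) ^ 2 := by
    conv_lhs => rw [hspec]
    rw [← mulVec_mulVec, ← mulVec_mulVec, dotProduct_mulVec, ← mulVec_transpose, hT, ← hu]
    simp only [dotProduct, mulVec_diagonal]
    exact Finset.sum_congr rfl fun i _ => by ring
  have hvv : v ⬝ᵥ v = ∑ i, (u i) ^ 2 := by
    have h1 : u ⬝ᵥ u = v ⬝ᵥ v := by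
      rw [hu, dotProduct_mulVec, vecMul_mulVec, ← hT, transpose_transpose, hT, hUU]
      simp [vecMul_one]
    rw [← h1]
    simp [dotProduct, sq]
  constructor
  · rw [hq, hvv, Finset.mul_sum]
    refine Finset.sum_le_sum fun i _ => ?_
    exact mul_le_mul_of_nonneg_right (ciInf_le (Finite.bddBelow_range _) i) (sq_nonneg _)
  · rw [hq, hvv, Finset.mul_sum]
    refine Finset.sum_le_sum fun i _ => ?_
    exact mul_le_mul_of_nonneg_right (le_ciSup (Finite.bddAbove_range _) i) (sq_nonneg _)


lemma sup_le_of_quad_le [Nonempty (Fin p)] {M N : Matrix (Fin p) (Fin p) ℝ}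
    (hM : M.IsHermitian) (hN : N.IsHermitian) {C : ℝ} (hC : 0 ≤ C)
    (hq : ∀ v, v ⬝ᵥ (M *ᵥ v) ≤ C * (v ⬝ᵥ (N *ᵥ v))) :
    (⨆ i, hM.eigenvalues i) ≤ C * ⨆ i, hN.eigenvalues i := by
  refine ciSup_le fun j => ?_
  set b : Fin p → ℝ := ⇑(hM.eigenvectorBasis j) with hb
  calc hM.eigenvalues j = b ⬝ᵥ (M *ᵥ b) := eig_eq_quad hM j
    _ ≤ C * (b ⬝ᵥ (N *ᵥ b)) := hq b
    _ ≤ C * ((⨆ i, hN.eigenvalues i) * (b ⬝ᵥ b)) :=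
        mul_le_mul_of_nonneg_left (rayleigh_bounds hN b).2 hC
    _ = C * ⨆ i, hN.eigenvalues i := by rw [dot_self_basis hM j, mul_one]

lemma inf_le_of_quad_le [Nonempty (Fin p)] {M N : Matrix (Fin p) (Fin p) ℝ}
    (hM : M.IsHermitian) (hN : N.IsHermitian) {C : ℝ} (hC : 0 ≤ C)
    (hq : ∀ v, v ⬝ᵥ (M *ᵥ v) ≤ C * (v ⬝ᵥ (N *ᵥ v))) :
    (⨅ i, hM.eigenvalues i) ≤ C * ⨅ i, hN.eigenvalues i := by
  obtain ⟨j, hj⟩ := Finite.exists_min hN.eigenvalues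
  have hinf : (⨅ i, hN.eigenvalues i) = hN.eigenvalues j :=
    le_antisymm (ciInf_le (Finite.bddBelow_range _) j) (le_ciInf hj)
  set b : Fin p → ℝ := ⇑(hN.eigenvectorBasis j) with hb
  calc (⨅ i, hM.eigenvalues i)
      = (⨅ i, hM.eigenvalues i) * (b ⬝ᵥ b) := by rw [dot_self_basis hN j, mul_one]
    _ ≤ b ⬝ᵥ (M *ᵥ b) := (rayleigh_bounds hM b).1
    _ ≤ C * (b ⬝ᵥ (N *ᵥ b)) := hq b
    _ = C * ⨅ i, hN.eigenvalues i := by rw [← eig_eq_quad hN j, hinf]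

lemma inf_pos_of_posdef [Nonempty (Fin p)] {M : Matrix (Fin p) (Fin p) ℝ}
    (hM : M.PosDef) : 0 < ⨅ i, hM.1.eigenvalues i := by
  obtain ⟨j, hj⟩ := Finite.exists_min hM.1.eigenvalues
  have hinf : (⨅ i, hM.1.eigenvalues i) = hM.1.eigenvalues j :=
    le_antisymm (ciInf_le (Finite.bddBelow_range _) j) (le_ciInf hj)
  rw [hinf]; exact hM.eigenvalues_pos j

lemma inf_le_sup_eig [Nonempty (Fin p)] {M : Matrix (Fin p) (Fin p) ℝ}
    (hM : M.IsHermitian) : (⨅ i, hM.eigenvalues i) ≤ ⨆ i, hM.eigenvalues i :=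
  le_trans (ciInf_le (Finite.bddBelow_range _) (Classical.arbitrary _))
    (le_ciSup (Finite.bddAbove_range _) _)


lemma quad_sum {n : ℕ} (c : Fin n → ℝ) (y : Fin n → Fin p → ℝ) (v : Fin p → ℝ) :
    v ⬝ᵥ ((((n : ℝ)⁻¹ • ∑ i, c i • vecMulVec (y i) (y i))) *ᵥ v)
      = (n : ℝ)⁻¹ * ∑ i, c i * (y i ⬝ᵥ v) ^ 2 := by
  simp only [dotProduct, mulVec, Matrix.smul_apply, Matrix.sum_apply, vecMulVec_apply, smul_eq_mul, sq,
    Finset.mul_sum, Finset.sum_mul]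
  conv_lhs => enter [2,j]; rw [Finset.sum_comm]
  rw [Finset.sum_comm]
  refine Finset.sum_congr rfl fun i _ => ?_
  rw [Finset.sum_comm]
  refine Finset.sum_congr rfl fun k _ => ?_
  refine Finset.sum_congr rfl fun j _ => ?_
  ring

lemma quad_gram {n : ℕ} (x : Fin n → Fin p → ℝ) (v : Fin p → ℝ) :
    v ⬝ᵥ (((Matrix.of x)ᵀ * Matrix.of x) *ᵥ v) = ∑ i, (x i ⬝ᵥ v) ^ 2 := by
  rw [← mulVec_mulVec, dotProduct_mulVec, ← mulVec_transpose, transpose_transpose]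
  simp only [dotProduct, mulVec, sq, Matrix.of_apply]

lemma quad_diag_gram {n : ℕ} (x : Fin n → Fin p → ℝ) (d : Fin p → ℝ) (v : Fin p → ℝ) :
    v ⬝ᵥ ((Matrix.diagonal d * ((Matrix.of x)ᵀ * Matrix.of x) * Matrix.diagonal d) *ᵥ v)
      = ∑ i, ((fun j => d j * x i j) ⬝ᵥ v) ^ 2 := by
  have hw : Matrix.diagonal d *ᵥ v = fun j => d j * v j := by
    ext j; rw [mulVec_diagonal]
  have hvm : v ᵥ* Matrix.diagonal d = fun j => d j * v j := by
    ext j; rw [vecMul_diagonal]; ring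
  rw [Matrix.mul_assoc, ← mulVec_mulVec, dotProduct_mulVec, hvm, ← mulVec_mulVec, hw, quad_gram]
  refine Finset.sum_congr rfl fun i _ => ?_
  congr 1
  simp only [dotProduct]
  exact Finset.sum_congr rfl fun j _ => by ring

end helpers

/-- For `f(X,w) = (1/n) Σᵢ fᵢ(wᵀxᵢ)` with each `fᵢ` λ-strongly convex and L-smooth and
`κ₀ = L/λ`: for any positive diagonal `D` with `κ(DXᵀXD) ≤ κ(XᵀX)`,
`κ(∇²_w f(XD,w)) ≤ κ₀² · κ(∇²_w f(X,w)) · κ(DXᵀXD)/κ(XᵀX)`. -/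
theorem stmt16 {n p : ℕ} (x : Fin n → Fin p → ℝ) (f : Fin n → ℝ → ℝ)
    (lam L : ℝ) (hlam : 0 < lam)
    (hbound : ∀ i z, lam ≤ deriv (deriv (f i)) z ∧ deriv (deriv (f i)) z ≤ L)
    (X : Matrix (Fin n) (Fin p) ℝ) (hX : X = Matrix.of x)
    (hpd : (Xᵀ * X).PosDef)
    (H : (Fin p → ℝ) → Matrix (Fin p) (Fin p) ℝ)
    (hH : H = fun w => (n : ℝ)⁻¹ •
      ∑ i, deriv (deriv (f i)) (∑ j, w j * x i j) • Matrix.vecMulVec (x i) (x i))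
    (hHh : ∀ w, (H w).IsHermitian)
    (d : Fin p → ℝ) (hd : ∀ j, 0 < d j)
    (HD : (Fin p → ℝ) → Matrix (Fin p) (Fin p) ℝ)
    (hHD : HD = fun w => (n : ℝ)⁻¹ •
      ∑ i, deriv (deriv (f i)) (∑ j, w j * (d j * x i j)) •
        Matrix.vecMulVec (fun j => d j * x i j) (fun j => d j * x i j))
    (hHDh : ∀ w, (HD w).IsHermitian)
    (hGh : (Matrix.diagonal d * (Xᵀ * X) * Matrix.diagonal d).IsHermitian)
    (hκ : kappa (Matrix.diagonal d * (Xᵀ * X) * Matrix.diagonal d) hGh ≤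
      kappa (Xᵀ * X) hpd.1) :
    ∀ w, kappa (HD w) (hHDh w) ≤
      (L / lam) ^ 2 * kappa (H w) (hHh w) *
        (kappa (Matrix.diagonal d * (Xᵀ * X) * Matrix.diagonal d) hGh /
          kappa (Xᵀ * X) hpd.1) := by
  intro w
  rcases Nat.eq_zero_or_pos p with hp | hp
  · subst hp
    haveI : IsEmpty (Fin 0) := inferInstance
    simp [kappa, iSup, iInf, Set.range_eq_empty, Real.sSup_empty, Real.sInf_empty]
  haveI : Nonempty (Fin p) := ⟨⟨0, hp⟩⟩
  have hn : 0 < n := by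
    rcases Nat.eq_zero_or_pos n with hn0 | hn0
    · exfalso
      subst hn0
      have hz : Xᵀ * X = 0 := by ext i j; simp [Matrix.mul_apply]
      have hone : (fun _ => (1:ℝ)) ≠ (0 : Fin p → ℝ) := by
        intro hv; have := congrFun hv ⟨0, hp⟩; norm_num at this
      have := hpd.dotProduct_mulVec_pos hone
      rw [hz] at this
      simp at this
    · exact hn0
  have hnR : (0:ℝ) < n := by exact_mod_cast hn
  have hlamL : lam ≤ L := le_trans (hbound ⟨0, hn⟩ 0).1 (hbound ⟨0, hn⟩ 0).2
  have hLpos : 0 < L := lt_of_lt_of_le hlam hlamL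
  -- quadratic forms
  set c : Fin n → ℝ := fun i => deriv (deriv (f i)) (∑ j, w j * x i j) with hc
  set cd : Fin n → ℝ := fun i => deriv (deriv (f i)) (∑ j, w j * (d j * x i j)) with hcd
  have hqA : ∀ v, v ⬝ᵥ ((Xᵀ * X) *ᵥ v) = ∑ i, (x i ⬝ᵥ v) ^ 2 := by
    intro v; rw [hX]; exact quad_gram x v
  have hqG : ∀ v, v ⬝ᵥ ((Matrix.diagonal d * (Xᵀ * X) * Matrix.diagonal d) *ᵥ v)
      = ∑ i, ((fun j => d j * x i j) ⬝ᵥ v) ^ 2 := by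
    intro v; rw [hX]; exact quad_diag_gram x d v
  have hqH : ∀ v, v ⬝ᵥ (H w *ᵥ v) = (n:ℝ)⁻¹ * ∑ i, c i * (x i ⬝ᵥ v) ^ 2 := by
    intro v; rw [hH]; exact quad_sum c x v
  have hqHD : ∀ v, v ⬝ᵥ (HD w *ᵥ v)
      = (n:ℝ)⁻¹ * ∑ i, cd i * ((fun j => d j * x i j) ⬝ᵥ v) ^ 2 := by
    intro v; rw [hHD]; exact quad_sum cd (fun i j => d j * x i j) v
  -- sum sandwich
  have main : ∀ (e : Fin n → ℝ), (∀ i, lam ≤ e i ∧ e i ≤ L) → ∀ (t : Fin n → ℝ),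
      (∀ i, 0 ≤ t i) →
      (n:ℝ)⁻¹ * ∑ i, e i * t i ≤ (L/n) * ∑ i, t i ∧
        ∑ i, t i ≤ (n/lam) * ((n:ℝ)⁻¹ * ∑ i, e i * t i) := by
    intro e he t ht
    constructor
    · rw [div_mul_eq_mul_div, div_eq_inv_mul]
      refine mul_le_mul_of_nonneg_left ?_ (by positivity)
      rw [Finset.mul_sum]
      exact Finset.sum_le_sum fun i _ => mul_le_mul_of_nonneg_right (he i).2 (ht i)
    · have h1 : ∑ i, t i = (n/lam) * ((n:ℝ)⁻¹ * ∑ i, lam * t i) := by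
        rw [← Finset.mul_sum]; field_simp
      rw [h1]
      refine mul_le_mul_of_nonneg_left (mul_le_mul_of_nonneg_left ?_ (by positivity))
        (by positivity)
      exact Finset.sum_le_sum fun i _ => mul_le_mul_of_nonneg_right (he i).1 (ht i)
  have hcB : ∀ i, lam ≤ c i ∧ c i ≤ L := fun i => hbound i _
  have hcdB : ∀ i, lam ≤ cd i ∧ cd i ≤ L := fun i => hbound i _
  -- eigenvalue abbreviations
  set a1 := ⨅ i, hpd.1.eigenvalues i with ha1
  set a2 := ⨆ i, hpd.1.eigenvalues i with ha2
  set g1 := ⨅ i, hGh.eigenvalues i with hg1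
  set g2 := ⨆ i, hGh.eigenvalues i with hg2
  set h1 := ⨅ i, (hHh w).eigenvalues i with hh1
  set h2 := ⨆ i, (hHh w).eigenvalues i with hh2
  set k1 := ⨅ i, (hHDh w).eigenvalues i with hk1
  set k2 := ⨆ i, (hHDh w).eigenvalues i with hk2
  have ha1pos : 0 < a1 := inf_pos_of_posdef hpd
  -- G posdef
  have hGpd : (Matrix.diagonal d * (Xᵀ * X) * Matrix.diagonal d).PosDef := by
    refine Matrix.PosDef.of_dotProduct_mulVec_pos hGh fun v hv => ?_
    have hv' : (fun j => d j * v j) ≠ 0 := by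
      intro h
      apply hv
      funext j
      have h2 := congrFun h j
      simp only [Pi.zero_apply] at h2 ⊢
      exact (mul_eq_zero.mp h2).resolve_left (ne_of_gt (hd j))
    have hpos := hpd.dotProduct_mulVec_pos hv'
    simp only [RCLike.re_to_real, star_trivial] at hpos ⊢
    rw [hqG v]
    rw [hqA] at hpos
    have : ∑ i, (x i ⬝ᵥ fun j => d j * v j) ^ 2
        = ∑ i, ((fun j => d j * x i j) ⬝ᵥ v) ^ 2 := by
      refine Finset.sum_congr rfl fun i _ => ?_
      congr 1
      simp only [dotProduct]
      exact Finset.sum_congr rfl fun j _ => by ring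
    rw [← this]
    exact hpos
  have hg1pos : 0 < g1 := inf_pos_of_posdef hGpd
  -- the four comparisons
  have hk2le : k2 ≤ (L/n) * g2 := by
    refine sup_le_of_quad_le (hHDh w) hGh (by positivity) fun v => ?_
    rw [hqHD v, hqG v]
    exact (main cd hcdB _ (fun i => sq_nonneg _)).1
  have hg1le : g1 ≤ (n/lam) * k1 := by
    refine inf_le_of_quad_le hGh (hHDh w) (by positivity) fun v => ?_
    rw [hqHD v, hqG v]
    exact (main cd hcdB _ (fun i => sq_nonneg _)).2
  have ha2le : a2 ≤ (n/lam) * h2 := by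
    refine sup_le_of_quad_le hpd.1 (hHh w) (by positivity) fun v => ?_
    rw [hqH v, hqA v]
    exact (main c hcB _ (fun i => sq_nonneg _)).2
  have hh1le : h1 ≤ (L/n) * a1 := by
    refine inf_le_of_quad_le (hHh w) hpd.1 (by positivity) fun v => ?_
    rw [hqH v, hqA v]
    exact (main c hcB _ (fun i => sq_nonneg _)).1
  have ha1le : a1 ≤ (n/lam) * h1 := by
    refine inf_le_of_quad_le hpd.1 (hHh w) (by positivity) fun v => ?_
    rw [hqH v, hqA v]
    exact (main c hcB _ (fun i => sq_nonneg _)).2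
  -- positivity
  have hposrule : ∀ y z : ℝ, 0 < y → y ≤ (↑n/lam) * z → 0 < z := by
    intro y z hy hyz
    by_contra hzn
    push_neg at hzn
    have := mul_nonpos_of_nonneg_of_nonpos (le_of_lt (div_pos hnR hlam)) hzn
    linarith
  have hh1pos : 0 < h1 := hposrule a1 h1 ha1pos ha1le
  have hk1pos : 0 < k1 := hposrule g1 k1 hg1pos hg1le
  have ha2pos : 0 < a2 := lt_of_lt_of_le ha1pos (inf_le_sup_eig hpd.1)
  have hg2pos : 0 < g2 := lt_of_lt_of_le hg1pos (inf_le_sup_eig hGh)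
  have hh2pos : 0 < h2 := hposrule a2 h2 ha2pos ha2le
  -- final arithmetic
  simp only [kappa, ← ha1, ← ha2, ← hg1, ← hg2, ← hh1, ← hh2, ← hk1, ← hk2]
  have step1 : k2 / k1 ≤ (L * g2) / (lam * g1) := by
    have e1 : ((L/n) * g2) / ((lam/n) * g1) = (L * g2) / (lam * g1) := by
      field_simp
    have hk1ge : (lam/n) * g1 ≤ k1 := by
      have h' := mul_le_mul_of_nonneg_left hg1le (le_of_lt (div_pos hlam hnR))
      have e' : (lam/↑n) * ((↑n/lam) * k1) = k1 := by field_simp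
      linarith
    calc k2 / k1 ≤ ((L/n) * g2) / ((lam/n) * g1) :=
          div_le_div₀ (by positivity) hk2le (by positivity) hk1ge
      _ = (L * g2) / (lam * g1) := e1
  have hh2ge : (lam/n) * a2 ≤ h2 := by
    have h' := mul_le_mul_of_nonneg_left ha2le (le_of_lt (div_pos hlam hnR))
    have e' : (lam/↑n) * ((↑n/lam) * h2) = h2 := by field_simp
    linarith
  have hhh : (lam * a2) / (L * a1) ≤ h2 / h1 := by
    have e2 : (lam * a2) / (L * a1) = ((lam/n) * a2) / ((L/n) * a1) := by
      field_simp
    rw [e2]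
    exact div_le_div₀ (le_of_lt hh2pos) hh2ge hh1pos hh1le
  have step2 : (L * g2) / (lam * g1) ≤ (L / lam) ^ 2 * (h2 / h1) * ((g2 / g1) / (a2 / a1)) := by
    have e3 : (L * g2) / (lam * g1)
        = (L / lam) ^ 2 * ((lam * a2) / (L * a1)) * ((g2 / g1) / (a2 / a1)) := by
      field_simp
    rw [e3]
    have hfac : (0:ℝ) ≤ (g2 / g1) / (a2 / a1) := by positivity
    have hfac2 : (0:ℝ) ≤ (L / lam) ^ 2 := by positivity
    exact mul_le_mul_of_nonneg_right (mul_le_mul_of_nonneg_left hhh hfac2) hfac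
  exact le_trans step1 step2
end

section
/- Let D⁰, Z⁰ be symmetric positive definite matrices with ‖(D⁰)^{1/2} Z⁰ (D⁰)^{1/2} − I‖_F ≤ β for β ∈ (0,1), and let W = (D⁰)^{1/2}((D⁰)^{1/2} Z⁰ (D⁰)^{1/2})^{-1/2}(D⁰)^{1/2} be the Nesterov–Todd scaling matrix. Then W also equals (Z⁰)^{-1/2}((Z⁰)^{1/2} D⁰ (Z⁰)^{1/2})^{1/2}(Z⁰)^{-1/2}, and Tr(W^{1/2}(D⁰)^{-1}W^{1/2} − W^{1/2}Z⁰W^{1/2})² = Tr((Z⁰)^{-1}(D⁰)^{-1}) − 2n + Tr(D⁰Z⁰) ≤ β²/(1 − β). -/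
open Matrix

open scoped ComplexOrder in
/-- The positive semidefinite square root of a positive semidefinite matrix (as in the older
Mathlib, where it was `Matrix.PosSemidef.sqrt`; removed since). -/
noncomputable def Matrix.PosSemidef.sqrt {n : Type*} [Fintype n] [DecidableEq n] {𝕜 : Type*}
    [RCLike 𝕜] {A : Matrix n n 𝕜} (hA : A.PosSemidef) : Matrix n n 𝕜 :=
  hA.1.eigenvectorUnitary.1 * diagonal ((↑) ∘ (√·) ∘ hA.1.eigenvalues) *
    (star hA.1.eigenvectorUnitary : Matrix n n 𝕜)

open scoped MatrixOrder in
theorem Matrix.PosSemidef.sqrt_eq_cfc {n : ℕ} {A : Matrix (Fin n) (Fin n) ℝ}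
    (hA : A.PosSemidef) : hA.sqrt = CFC.sqrt A := by
  rw [CFC.sqrt_eq_real_sqrt A hA.nonneg, cfcₙ_eq_cfc, hA.1.cfc_eq, IsHermitian.cfc,
    Unitary.conjStarAlgAut_apply]
  rfl

open scoped MatrixOrder in
theorem Matrix.PosSemidef.sqrt_mul_self {n : ℕ} {A : Matrix (Fin n) (Fin n) ℝ}
    (hA : A.PosSemidef) : hA.sqrt * hA.sqrt = A := by
  rw [hA.sqrt_eq_cfc]; exact CFC.sqrt_mul_sqrt_self A hA.nonneg

open scoped MatrixOrder in
theorem Matrix.PosSemidef.posSemidef_sqrt {n : ℕ} {A : Matrix (Fin n) (Fin n) ℝ}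
    (hA : A.PosSemidef) : hA.sqrt.PosSemidef := by
  rw [hA.sqrt_eq_cfc]; exact (CFC.sqrt_nonneg A).posSemidef

open scoped MatrixOrder in
theorem Matrix.PosSemidef.eq_sqrt_of_sq_eq {n : ℕ} {A B : Matrix (Fin n) (Fin n) ℝ}
    (hA : A.PosSemidef) (hB : B.PosSemidef) (h : A ^ 2 = B) : A = hB.sqrt := by
  rw [hB.sqrt_eq_cfc]; exact (CFC.sqrt_unique (by rw [← h, pow_two]) hA.nonneg).symm

/-- Frobenius norm of a real square matrix. -/
noncomputable def frob {n : ℕ} (A : Matrix (Fin n) (Fin n) ℝ) : ℝ :=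
  Real.sqrt (Matrix.trace (Aᵀ * A))

set_option maxHeartbeats 1000000 in
/-- Properties of the Nesterov–Todd scaling matrix
`W = D^{1/2}(D^{1/2} Z D^{1/2})^{-1/2} D^{1/2}`: it equals
`Z^{-1/2}(Z^{1/2} D Z^{1/2})^{1/2} Z^{-1/2}`, and
`Tr(W^{1/2} D⁻¹ W^{1/2} − W^{1/2} Z W^{1/2})² = Tr(Z⁻¹D⁻¹) − 2n + Tr(DZ) ≤ β²/(1−β)`. -/
theorem stmt17 {n : ℕ} (D Z : Matrix (Fin n) (Fin n) ℝ) (hD : D.PosDef) (hZ : Z.PosDef)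
    (β : ℝ) (hβ : β ∈ Set.Ioo (0 : ℝ) 1)
    (hfr : frob (hD.posSemidef.sqrt * Z * hD.posSemidef.sqrt - 1) ≤ β)
    (hM : (hD.posSemidef.sqrt * Z * hD.posSemidef.sqrt).PosDef)
    (hMZ : (hZ.posSemidef.sqrt * D * hZ.posSemidef.sqrt).PosDef)
    (W : Matrix (Fin n) (Fin n) ℝ)
    (hWdef : W = hD.posSemidef.sqrt * (hM.posSemidef.sqrt)⁻¹ * hD.posSemidef.sqrt)
    (hW : W.PosDef) :
    W = (hZ.posSemidef.sqrt)⁻¹ * hMZ.posSemidef.sqrt * (hZ.posSemidef.sqrt)⁻¹ ∧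
    Matrix.trace ((hW.posSemidef.sqrt * D⁻¹ * hW.posSemidef.sqrt -
        hW.posSemidef.sqrt * Z * hW.posSemidef.sqrt) ^ 2) =
      Matrix.trace (Z⁻¹ * D⁻¹) - 2 * n + Matrix.trace (D * Z) ∧
    Matrix.trace (Z⁻¹ * D⁻¹) - 2 * n + Matrix.trace (D * Z) ≤ β ^ 2 / (1 - β) := by
  obtain ⟨hβ0, hβ1⟩ := hβ
  set S := hD.posSemidef.sqrt with hSdef
  set Q := hM.posSemidef.sqrt with hQdef
  set Sz := hZ.posSemidef.sqrt with hSzdef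
  set T := hW.posSemidef.sqrt with hTdef
  have hSS : S * S = D := hD.posSemidef.sqrt_mul_self
  have hQQ : Q * Q = S * Z * S := hM.posSemidef.sqrt_mul_self
  have hSzSz : Sz * Sz = Z := hZ.posSemidef.sqrt_mul_self
  have hTT : T * T = W := hW.posSemidef.sqrt_mul_self
  have detUnit : ∀ {A B : Matrix (Fin n) (Fin n) ℝ}, B.PosDef → A * A = B → IsUnit A.det := by
    intro A B hB hAB
    have hdet : A.det * A.det = B.det := by rw [← Matrix.det_mul, hAB]
    have hBd := hB.det_pos
    refine isUnit_iff_ne_zero.mpr fun h => ?_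
    rw [h, mul_zero] at hdet
    linarith
  have hQd := detUnit hM hQQ
  have hSd := detUnit hD hSS
  have hSzd := detUnit hZ hSzSz
  have hQ1 : Q⁻¹ * Q = 1 := Matrix.nonsing_inv_mul _ hQd
  have hQ2 : Q * Q⁻¹ = 1 := Matrix.mul_nonsing_inv _ hQd
  have hSz1 : Sz⁻¹ * Sz = 1 := Matrix.nonsing_inv_mul _ hSzd
  have hSz2 : Sz * Sz⁻¹ = 1 := Matrix.mul_nonsing_inv _ hSzd
  have hWd : IsUnit W.det := (Matrix.isUnit_iff_isUnit_det W).mp hW.isUnit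
  have hW1 : W⁻¹ * W = 1 := Matrix.nonsing_inv_mul _ hWd
  have hW2 : W * W⁻¹ = 1 := Matrix.mul_nonsing_inv _ hWd
  have hDd : IsUnit D.det := (Matrix.isUnit_iff_isUnit_det D).mp hD.isUnit
  have hZd : IsUnit Z.det := (Matrix.isUnit_iff_isUnit_det Z).mp hZ.isUnit
  have hD1 : D⁻¹ * D = 1 := Matrix.nonsing_inv_mul _ hDd
  have hZ2 : Z * Z⁻¹ = 1 := Matrix.mul_nonsing_inv _ hZd
  -- key identity: W Z W = D
  have key1 : W * Z * W = D := by
    have h1 : W * Z * W = S * (Q⁻¹ * (S * Z * S) * Q⁻¹) * S := by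
      simp only [hWdef, Matrix.mul_assoc]; rfl
    rw [h1, ← hQQ]
    have hmid : Q⁻¹ * (Q * Q) * Q⁻¹ = 1 := by
      rw [← Matrix.mul_assoc, hQ1, one_mul, hQ2]
    rw [hmid, mul_one, hSS]
  -- key identity: W D⁻¹ W = Z⁻¹
  have key2 : W * D⁻¹ * W = Z⁻¹ := by
    have hDinv : D⁻¹ = W⁻¹ * (Z⁻¹ * W⁻¹) := by
      rw [← key1, Matrix.mul_inv_rev, Matrix.mul_inv_rev]
    rw [hDinv]
    have e : W * (W⁻¹ * (Z⁻¹ * W⁻¹)) * W = W * W⁻¹ * Z⁻¹ * (W⁻¹ * W) := by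
      simp only [Matrix.mul_assoc]
    rw [e, hW2, hW1, one_mul, mul_one]
  -- Part 1
  have part1 : W = Sz⁻¹ * hMZ.posSemidef.sqrt * Sz⁻¹ := by
    have hps : (Sz * W * Sz).PosSemidef := by
      have h := hW.posSemidef.mul_mul_conjTranspose_same Sz
      rwa [hZ.posSemidef.posSemidef_sqrt.1] at h
    have hsq : (Sz * W * Sz) ^ 2 = Sz * D * Sz := by
      have e : (Sz * W * Sz) ^ 2 = Sz * (W * (Sz * Sz) * W) * Sz := by
        rw [pow_two]; simp only [Matrix.mul_assoc]
      rw [e, hSzSz, key1]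
    have hNsd : Sz * W * Sz = hMZ.posSemidef.sqrt := hps.eq_sqrt_of_sq_eq hMZ.posSemidef hsq
    rw [← hNsd]
    have e : Sz⁻¹ * (Sz * W * Sz) * Sz⁻¹ = Sz⁻¹ * Sz * W * (Sz * Sz⁻¹) := by
      simp only [Matrix.mul_assoc]
    rw [e, hSz1, hSz2, one_mul, mul_one]
  -- Part 2: the trace identity
  have hn : Matrix.trace (1 : Matrix (Fin n) (Fin n) ℝ) = (n : ℝ) := by
    simp [Matrix.trace_one]
  have key1' : W * (Z * W) = D := by rw [← Matrix.mul_assoc, key1]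
  have key2' : W * (D⁻¹ * W) = Z⁻¹ := by rw [← Matrix.mul_assoc, key2]
  have hTT' : ∀ X : Matrix (Fin n) (Fin n) ℝ, T * (T * X) = W * X := fun X => by
    rw [← Matrix.mul_assoc, hTT]
  have t1 : Matrix.trace ((T * D⁻¹ * T) * (T * D⁻¹ * T)) = Matrix.trace (Z⁻¹ * D⁻¹) := by
    have e : (T * D⁻¹ * T) * (T * D⁻¹ * T) = T * (D⁻¹ * (T * (T * (D⁻¹ * T)))) := by
      simp only [Matrix.mul_assoc]
    rw [e, Matrix.trace_mul_comm]
    have e2 : D⁻¹ * (T * (T * (D⁻¹ * T))) * T = D⁻¹ * (T * (T * (D⁻¹ * (T * T)))) := by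
      simp only [Matrix.mul_assoc]
    rw [e2, hTT, hTT', key2', Matrix.trace_mul_comm]
  have t2 : Matrix.trace ((T * D⁻¹ * T) * (T * Z * T)) = (n : ℝ) := by
    have e : (T * D⁻¹ * T) * (T * Z * T) = T * (D⁻¹ * (T * (T * (Z * T)))) := by
      simp only [Matrix.mul_assoc]
    rw [e, Matrix.trace_mul_comm]
    have e2 : D⁻¹ * (T * (T * (Z * T))) * T = D⁻¹ * (T * (T * (Z * (T * T)))) := by
      simp only [Matrix.mul_assoc]
    rw [e2, hTT, hTT', key1', hD1, hn]
  have t3 : Matrix.trace ((T * Z * T) * (T * D⁻¹ * T)) = (n : ℝ) := by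
    have e : (T * Z * T) * (T * D⁻¹ * T) = T * (Z * (T * (T * (D⁻¹ * T)))) := by
      simp only [Matrix.mul_assoc]
    rw [e, Matrix.trace_mul_comm]
    have e2 : Z * (T * (T * (D⁻¹ * T))) * T = Z * (T * (T * (D⁻¹ * (T * T)))) := by
      simp only [Matrix.mul_assoc]
    rw [e2, hTT, hTT', key2', hZ2, hn]
  have t4 : Matrix.trace ((T * Z * T) * (T * Z * T)) = Matrix.trace (D * Z) := by
    have e : (T * Z * T) * (T * Z * T) = T * (Z * (T * (T * (Z * T)))) := by
      simp only [Matrix.mul_assoc]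
    rw [e, Matrix.trace_mul_comm]
    have e2 : Z * (T * (T * (Z * T))) * T = Z * (T * (T * (Z * (T * T)))) := by
      simp only [Matrix.mul_assoc]
    rw [e2, hTT, hTT', key1', Matrix.trace_mul_comm]
  have part2 : Matrix.trace ((T * D⁻¹ * T - T * Z * T) ^ 2) =
      Matrix.trace (Z⁻¹ * D⁻¹) - 2 * n + Matrix.trace (D * Z) := by
    have expand : (T * D⁻¹ * T - T * Z * T) ^ 2 =
        (T * D⁻¹ * T) * (T * D⁻¹ * T) - (T * D⁻¹ * T) * (T * Z * T)
          - (T * Z * T) * (T * D⁻¹ * T) + (T * Z * T) * (T * Z * T) := by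
      rw [pow_two]; noncomm_ring
    rw [expand, Matrix.trace_add, Matrix.trace_sub, Matrix.trace_sub, t1, t2, t3, t4]
    ring
  -- Part 3: the spectral bound
  have hherm := hM.1
  set U : Matrix (Fin n) (Fin n) ℝ := (hherm.eigenvectorUnitary : Matrix (Fin n) (Fin n) ℝ)
    with hUdef
  set μ : Fin n → ℝ := hherm.eigenvalues with hμdef
  have hU1 : star U * U = 1 := Matrix.mem_unitaryGroup_iff'.mp hherm.eigenvectorUnitary.2
  have hU2 : U * star U = 1 := Matrix.mem_unitaryGroup_iff.mp hherm.eigenvectorUnitary.2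
  have hspec : S * Z * S = U * diagonal μ * star U := by
    have h := hherm.spectral_theorem
    simpa using h
  have trconj : ∀ d : Fin n → ℝ, Matrix.trace (U * diagonal d * star U) = ∑ i, d i := by
    intro d
    rw [Matrix.trace_mul_cycle, hU1, one_mul, Matrix.trace_diagonal]
  have conjmul : ∀ d e : Fin n → ℝ, (U * diagonal d * star U) * (U * diagonal e * star U) =
      U * diagonal (fun i => d i * e i) * star U := by
    intro d e
    have a1 : (U * diagonal d * star U) * (U * diagonal e * star U) =
        U * diagonal d * (star U * U) * diagonal e * star U := by
      simp only [Matrix.mul_assoc]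
    rw [a1, hU1, mul_one, Matrix.mul_assoc U, Matrix.diagonal_mul_diagonal]
  have hpos : ∀ i, 0 < μ i := hM.eigenvalues_pos
  clear_value U μ
  have hMinv : (S * Z * S)⁻¹ = U * diagonal (fun i => (μ i)⁻¹) * star U := by
    apply Matrix.inv_eq_right_inv
    rw [hspec, conjmul]
    have : (fun i => μ i * (μ i)⁻¹) = fun _ => (1 : ℝ) := by
      funext i; exact mul_inv_cancel₀ (hpos i).ne'
    rw [this, Matrix.diagonal_one, mul_one, hU2]
  have hMsub : S * Z * S - 1 = U * diagonal (fun i => μ i - 1) * star U := by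
    have h1eq : (1 : Matrix (Fin n) (Fin n) ℝ) = U * diagonal (fun _ => (1 : ℝ)) * star U := by
      rw [Matrix.diagonal_one, mul_one, hU2]
    rw [hspec]
    conv_lhs => rw [h1eq]
    rw [← Matrix.sub_mul, ← Matrix.mul_sub, Matrix.diagonal_sub]
  have htrM : Matrix.trace (S * Z * S) = ∑ i, μ i := by rw [hspec, trconj]
  have htrMinv : Matrix.trace ((S * Z * S)⁻¹) = ∑ i, (μ i)⁻¹ := by rw [hMinv, trconj]
  -- transpose of M - 1 is itself
  have hsymm : (S * Z * S - 1)ᵀ = S * Z * S - 1 := by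
    have h := hherm
    rw [Matrix.transpose_sub, Matrix.transpose_one]
    congr 1
  have htrsq : Matrix.trace ((S * Z * S - 1)ᵀ * (S * Z * S - 1)) = ∑ i, (μ i - 1) ^ 2 := by
    rw [hsymm, hMsub, conjmul, trconj]
    exact Finset.sum_congr rfl fun i _ => (sq (μ i - 1)).symm
  have hsumβ : ∑ i, (μ i - 1) ^ 2 ≤ β ^ 2 := by
    have h0 : (0 : ℝ) ≤ ∑ i, (μ i - 1) ^ 2 :=
      Finset.sum_nonneg fun i _ => sq_nonneg _
    have hfr' : Real.sqrt (∑ i, (μ i - 1) ^ 2) ≤ β := by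
      have := hfr
      unfold frob at this
      rwa [htrsq] at this
    calc ∑ i, (μ i - 1) ^ 2 = Real.sqrt (∑ i, (μ i - 1) ^ 2) ^ 2 := (Real.sq_sqrt h0).symm
      _ ≤ β ^ 2 := by
          have := Real.sqrt_nonneg (∑ i, (μ i - 1) ^ 2)
          nlinarith
  have hlow : ∀ i, 1 - β ≤ μ i := by
    intro i
    have h1 : (μ i - 1) ^ 2 ≤ β ^ 2 :=
      le_trans (Finset.single_le_sum (fun j _ => sq_nonneg (μ j - 1)) (Finset.mem_univ i)) hsumβ
    nlinarith [sq_nonneg (μ i - 1 + β)]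
  -- translate traces
  have e1 : Matrix.trace (D * Z) = ∑ i, μ i := by
    rw [← htrM, Matrix.trace_mul_cycle, hSS]
  have e2 : Matrix.trace (Z⁻¹ * D⁻¹) = ∑ i, (μ i)⁻¹ := by
    rw [← htrMinv]
    have hi : (S * Z * S)⁻¹ = S⁻¹ * (Z⁻¹ * S⁻¹) := by
      rw [Matrix.mul_inv_rev, Matrix.mul_inv_rev]
    have hSinv : S⁻¹ * S⁻¹ = D⁻¹ := by rw [← Matrix.mul_inv_rev, hSS]
    rw [hi, Matrix.trace_mul_comm S⁻¹ (Z⁻¹ * S⁻¹), Matrix.mul_assoc, hSinv]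
  have sumform : Matrix.trace (Z⁻¹ * D⁻¹) - 2 * n + Matrix.trace (D * Z) =
      ∑ i, (μ i - 1) ^ 2 / μ i := by
    rw [e1, e2]
    have h2n : (2 : ℝ) * n = ∑ _i : Fin n, (2 : ℝ) := by
      simp [Finset.sum_const, Finset.card_univ]
      ring
    rw [h2n, ← Finset.sum_sub_distrib, ← Finset.sum_add_distrib]
    refine Finset.sum_congr rfl fun i _ => ?_
    field_simp [(hpos i).ne']
    ring
  have part3 : Matrix.trace (Z⁻¹ * D⁻¹) - 2 * n + Matrix.trace (D * Z) ≤ β ^ 2 / (1 - β) := by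
    rw [sumform]
    have h1β : (0 : ℝ) < 1 - β := by linarith
    calc ∑ i, (μ i - 1) ^ 2 / μ i ≤ ∑ i, (μ i - 1) ^ 2 / (1 - β) := by
          refine Finset.sum_le_sum fun i _ => ?_
          rw [div_le_div_iff₀ (hpos i) h1β]
          nlinarith [mul_nonneg (sub_nonneg.mpr (hlow i)) (sq_nonneg (μ i - 1))]
      _ = (∑ i, (μ i - 1) ^ 2) / (1 - β) := by rw [Finset.sum_div]
      _ ≤ β ^ 2 / (1 - β) := by
          exact (div_le_div_iff_of_pos_right h1β).mpr hsumβ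
  exact ⟨part1, part2, part3⟩
end
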